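/- For a skew-symmetric matrix A of even order n, and indices r≠s, the minor A_{rs} (obtained by deleting row r and column s) satisfies A_{rs}² = det(A)·det(A_{rs,rs}), where A_{rs,rs} is the submatrix obtained by deleting rows r,s and columns r,s. -/

import Mathlib

open Matrix


lemma alt_odd_det_zero {R : Type*} [CommRing R] {m : ℕ} (hm : Odd m)
    (B : Matrix (Fin m) (Fin m) R) (hB : Bᵀ = -B) (hdiag : ∀ i, B i i = 0) :
    B.det = 0 := by
  classical
  let Y : Matrix (Fin m) (Fin m) (MvPolynomial (Fin m × Fin m) ℤ) :=
    fun i j => MvPolynomial.X (i, j) - MvPolynomial.X (j, i)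
  have hYdet : Y.det = 0 := by
    have h1 : Yᵀ = -Y := by
      ext i j : 1; rw [transpose_apply, Matrix.neg_apply]; simp [Y]
    have h2 : Y.det = -Y.det := by
      conv_lhs => rw [← det_transpose, h1, det_neg]
      rw [Fintype.card_fin, hm.neg_one_pow]
      ring
    have h3 : (2 : MvPolynomial (Fin m × Fin m) ℤ) * Y.det = 0 := by linear_combination h2
    rcases mul_eq_zero.mp h3 with h | h
    · exact absurd h (by norm_num)
    · exact h
  let f : MvPolynomial (Fin m × Fin m) ℤ →+* R := MvPolynomial.eval₂Hom (Int.castRingHom R)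
    (fun p => if p.2 < p.1 then 0 else B p.1 p.2)
  have hmap : f.mapMatrix Y = B := by
    ext i j
    show f (MvPolynomial.X (i, j) - MvPolynomial.X (j, i)) = B i j
    rw [map_sub, MvPolynomial.eval₂Hom_X', MvPolynomial.eval₂Hom_X']
    simp only
    rcases lt_trichotomy i j with h | h | h
    · rw [if_neg (not_lt.2 h.le), if_pos h, sub_zero]
    · subst h; simp [hdiag i]
    · rw [if_pos h, if_neg (not_lt.2 h.le), zero_sub]
      have := congrFun (congrFun hB i) j
      simp only [transpose_apply, Matrix.neg_apply] at this
      rw [this]; ring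
  calc B.det = (f.mapMatrix Y).det := by rw [hmap]
    _ = f Y.det := (RingHom.map_det f Y).symm
    _ = 0 := by rw [hYdet, map_zero]

lemma submatrix_updateCol_inj {R : Type*} {l m n o : Type*} [DecidableEq n] [DecidableEq o]
    (A : Matrix l n R) (f : m → l) (g : o → n) (hg : Function.Injective g)
    (j₀ : o) (v : l → R) :
    (A.updateCol (g j₀) v).submatrix f g = (A.submatrix f g).updateCol j₀ (v ∘ f) := by
  ext i j
  by_cases h : j = j₀
  · subst h; simp [updateCol_apply]
  · have hg' : g j ≠ g j₀ := fun hh => h (hg hh)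
    simp [updateCol_apply, h, hg']

lemma det_updateCol_single {R : Type*} [CommRing R] {n : ℕ}
    (M : Matrix (Fin (n+1)) (Fin (n+1)) R) (t : Fin (n+1)) :
    (M.updateCol t (Pi.single t 1)).det = (M.submatrix t.succAbove t.succAbove).det := by
  have h1 : (M.updateCol t (Pi.single t 1)).det = (Mᵀ.updateRow t (Pi.single t 1)).det := by
    rw [updateRow_transpose, det_transpose]
  rw [h1, ← adjugate_apply, ← adjugate_transpose, transpose_apply,
    adjugate_fin_succ_eq_det_submatrix]
  have : ((-1 : R)) ^ ((t : ℕ) + t) = 1 := Even.neg_one_pow ⟨t, by ring⟩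
  rw [this, one_mul]

lemma det_update_basis_cols {R : Type*} [CommRing R] {m : ℕ}
    (A : Matrix (Fin (m+2)) (Fin (m+2)) R) (r s : Fin (m+2)) (hrs : r ≠ s) :
    ((A.updateCol r (Pi.single r 1)).updateCol s (Pi.single s 1)).det =
      (A.submatrix (fun k : {k : Fin (m+2) // k ≠ r ∧ k ≠ s} => k.val)
                   (fun k : {k : Fin (m+2) // k ≠ r ∧ k ≠ s} => k.val)).det := by
  classical
  obtain ⟨r', hr'⟩ := Fin.exists_succAbove_eq hrs
  set B := A.updateCol r (Pi.single r 1) with hBdef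
  have h2 : (B.updateCol s (Pi.single s 1)).det = (B.submatrix s.succAbove s.succAbove).det :=
    det_updateCol_single B s
  have hfun : (Pi.single (s.succAbove r') 1 ∘ s.succAbove : Fin (m+1) → R) = Pi.single r' 1 := by
    funext k
    simp only [Function.comp_apply]
    rcases eq_or_ne k r' with h | h
    · subst h; simp
    · rw [Pi.single_eq_of_ne h, Pi.single_eq_of_ne]
      exact fun hh => h (Fin.succAbove_right_injective hh)
  have h3 : B.submatrix s.succAbove s.succAbove =
      (A.submatrix s.succAbove s.succAbove).updateCol r' (Pi.single r' 1) := by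
    rw [hBdef, ← hr',
      submatrix_updateCol_inj A s.succAbove s.succAbove (Fin.succAbove_right_injective) r',
      hfun]
  have h4 : ((A.submatrix s.succAbove s.succAbove).updateCol r' (Pi.single r' 1)).det =
      ((A.submatrix s.succAbove s.succAbove).submatrix r'.succAbove r'.succAbove).det :=
    det_updateCol_single _ r'
  rw [h2, h3, h4]
  have hne : ∀ i : Fin m, s.succAbove (r'.succAbove i) ≠ r ∧ s.succAbove (r'.succAbove i) ≠ s := by
    intro i
    refine ⟨?_, Fin.succAbove_ne s _⟩
    rw [← hr']
    exact fun hh => Fin.succAbove_ne r' i (Fin.succAbove_right_injective hh)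
  let e : Fin m → {k : Fin (m+2) // k ≠ r ∧ k ≠ s} :=
    fun i => ⟨s.succAbove (r'.succAbove i), hne i⟩
  have hbij : Function.Bijective e := by
    constructor
    · intro a b hab
      exact Fin.succAbove_right_injective
        (Fin.succAbove_right_injective (congrArg Subtype.val hab))
    · rintro ⟨k, hk1, hk2⟩
      obtain ⟨a, ha⟩ := Fin.exists_succAbove_eq hk2
      have ha' : a ≠ r' := by
        rintro rfl
        rw [hr'] at ha
        exact hk1 ha.symm
      obtain ⟨b, hb⟩ := Fin.exists_succAbove_eq ha'
      exact ⟨b, Subtype.ext (by simp only [e, hb, ha])⟩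
  have hmat : (A.submatrix s.succAbove s.succAbove).submatrix r'.succAbove r'.succAbove
      = ((A.submatrix (fun k : {k : Fin (m+2) // k ≠ r ∧ k ≠ s} => k.val)
                 (fun k : {k : Fin (m+2) // k ≠ r ∧ k ≠ s} => k.val)).submatrix
          (Equiv.ofBijective e hbij) (Equiv.ofBijective e hbij)) := by
    ext i j
    rfl
  rw [hmat, det_submatrix_equiv_self]

lemma det_one_two_basis {R : Type*} [CommRing R] {n : Type*} [DecidableEq n] [Fintype n]
    (r s : n) (hrs : r ≠ s) (j i : n) :
    (((1 : Matrix n n R).updateCol s (Pi.single i 1)).updateCol r (Pi.single j 1)).det =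
      (if j = r ∧ i = s then 1 else 0) - (if j = s ∧ i = r then 1 else 0) := by
  classical
  set M := ((1 : Matrix n n R).updateCol s (Pi.single i 1)).updateCol r (Pi.single j 1)
    with hM
  have col_r : ∀ k, M k r = (Pi.single j 1 : n → R) k := by intro k; simp [hM]
  have col_s : ∀ k, M k s = (Pi.single i 1 : n → R) k := by
    intro k; simp [hM, updateCol_apply, hrs.symm]
  have col_other : ∀ k l, l ≠ r → l ≠ s → M k l = (1 : Matrix n n R) k l := by
    intro k l h1 h2; simp [hM, updateCol_apply, h1, h2]
  by_cases hA : j = r ∧ i = s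
  · have hM1 : M = 1 := by
      ext k l
      rcases eq_or_ne l r with rfl | h1
      · rw [col_r, hA.1]; simp [Matrix.one_apply, Pi.single_apply]
      · rcases eq_or_ne l s with rfl | h2
        · rw [col_s, hA.2]; simp [Matrix.one_apply, Pi.single_apply]
        · rw [col_other k l h1 h2]
    have hB : ¬(j = s ∧ i = r) := by
      rintro ⟨h1, -⟩; exact hrs (hA.1.symm.trans h1)
    rw [hM1, det_one, if_pos hA, if_neg hB, sub_zero]
  · by_cases hB : j = s ∧ i = r
    · have hM1 : M = (1 : Matrix n n R).submatrix id (Equiv.swap r s) := by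
        ext k l
        rcases eq_or_ne l r with rfl | h1
        · rw [col_r, hB.1]
          simp [Matrix.one_apply, Pi.single_apply, Equiv.swap_apply_left]
        · rcases eq_or_ne l s with rfl | h2
          · rw [col_s, hB.2]
            simp [Matrix.one_apply, Pi.single_apply, Equiv.swap_apply_right]
          · rw [col_other k l h1 h2]
            simp [Matrix.one_apply, Equiv.swap_apply_of_ne_of_ne h1 h2]
      rw [hM1, det_permute', det_one, Equiv.Perm.sign_swap hrs, if_neg hA, if_pos hB]
      simp
    · -- det M = 0
      have hdet : M.det = 0 := by
        by_cases hjr : j = r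
        · -- then i ≠ s
          have his : i ≠ s := fun h => hA ⟨hjr, h⟩
          by_cases hir : i = r
          · -- columns r and s both equal e_r
            refine det_zero_of_column_eq hrs (fun k => ?_)
            rw [col_r, col_s, hjr, hir]
          · -- column i (∉ {r,s}) equals column s
            refine det_zero_of_column_eq (Ne.symm his) (fun k => ?_)
            rw [col_s, col_other k i hir his]
            simp [Matrix.one_apply, Pi.single_apply, eq_comm]
        · by_cases hjs : j = s
          · have hir : i ≠ r := fun h => hB ⟨hjs, h⟩
            by_cases his : i = s
            · refine det_zero_of_column_eq hrs (fun k => ?_)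
              rw [col_r, col_s, hjs, his]
            · refine det_zero_of_column_eq (Ne.symm his) (fun k => ?_)
              rw [col_s, col_other k i hir his]
              simp [Matrix.one_apply, Pi.single_apply, eq_comm]
          · -- column j (∉ {r,s}) equals column r
            refine det_zero_of_column_eq (Ne.symm hjr) (fun k => ?_)
            rw [col_r, col_other k j hjr hjs]
            simp [Matrix.one_apply, Pi.single_apply, eq_comm]
      rw [hdet, if_neg hA, if_neg hB, sub_zero]

lemma my_updateCol_comm {R : Type*} {m n : Type*} [DecidableEq n] {r s : n} (hrs : r ≠ s)
    (M : Matrix m n R) (u v : m → R) :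
    (M.updateCol r u).updateCol s v = (M.updateCol s v).updateCol r u := by
  ext i j
  rcases eq_or_ne j s with rfl | h1
  · simp [updateCol_apply, hrs.symm]
  · rcases eq_or_ne j r with rfl | h2
    · simp [updateCol_apply, h1]
    · simp [updateCol_apply, h1, h2]

lemma vec_eq_sum_single {R : Type*} [CommRing R] {n : Type*} [DecidableEq n] [Fintype n]
    (v : n → R) : v = ∑ i, v i • (Pi.single i 1 : n → R) := by
  funext k
  simp [Finset.sum_apply, Pi.single_apply]

lemma det_D {R : Type*} [CommRing R] {n : Type*} [DecidableEq n] [Fintype n]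
    (A : Matrix n n R) (r s : n) (hrs : r ≠ s)
    (hone : ∀ j i : n, (((1 : Matrix n n R).updateCol s (Pi.single i 1)).updateCol r
        (Pi.single j 1)).det =
      (if j = r ∧ i = s then 1 else 0) - (if j = s ∧ i = r then 1 else 0)) :
    (((1 : Matrix n n R).updateCol r (fun i => adjugate A i r)).updateCol s
        (fun i => adjugate A i s)).det =
      adjugate A r r * adjugate A s s - adjugate A s r * adjugate A r s := by
  classical
  set u : n → R := fun i => adjugate A i r with hu
  set v : n → R := fun i => adjugate A i s with hv
  have step1 : (((1 : Matrix n n R).updateCol r u).updateCol s v).det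
      = ∑ i, v i * ((((1 : Matrix n n R).updateCol r u).updateCol s
          (Pi.single i 1)).det) := by
    rw [← cramer_apply]
    conv_lhs => rw [vec_eq_sum_single v]
    rw [map_sum]
    simp only [LinearMap.map_smul, smul_eq_mul, Finset.sum_apply, Pi.smul_apply, cramer_apply]
  have step2 : ∀ i : n, ((((1 : Matrix n n R).updateCol r u).updateCol s
      (Pi.single i 1)).det) = ∑ j, u j *
        ((((1 : Matrix n n R).updateCol s (Pi.single i 1)).updateCol r
          (Pi.single j 1)).det) := by
    intro i
    rw [my_updateCol_comm hrs, ← cramer_apply]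
    conv_lhs => rw [vec_eq_sum_single u]
    rw [map_sum]
    simp only [LinearMap.map_smul, smul_eq_mul, Finset.sum_apply, Pi.smul_apply, cramer_apply]
  rw [step1]
  simp only [step2, hone]
  simp only [mul_sub, Finset.mul_sum, ← Finset.sum_sub_distrib]
  rw [Finset.sum_comm]
  simp only [ite_and, mul_ite, mul_one, mul_zero, Finset.sum_ite_eq', Finset.mem_univ, if_true,
    Finset.sum_sub_distrib]
  simp [hu, hv, hrs, Ne.symm hrs, mul_comm]

lemma mul_D_eq {R : Type*} [CommRing R] {n : Type*} [DecidableEq n] [Fintype n]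
    (A : Matrix n n R) (r s : n) (hrs : r ≠ s) :
    A * (((1 : Matrix n n R).updateCol r (fun i => adjugate A i r)).updateCol s
        (fun i => adjugate A i s)) =
      (A.updateCol r (A.det • (Pi.single r 1 : n → R))).updateCol s
        (A.det • (Pi.single s 1 : n → R)) := by
  classical
  set D := ((1 : Matrix n n R).updateCol r (fun i => adjugate A i r)).updateCol s
      (fun i => adjugate A i s) with hD
  ext i k
  rw [Matrix.mul_apply]
  rcases eq_or_ne k s with rfl | h1
  · have hcol : ∀ l, D l k = adjugate A l k := fun l => by rw [hD, updateCol_self]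
    simp only [hcol]
    have h2 : ∑ l, A i l * adjugate A l k = (A * adjugate A) i k := (Matrix.mul_apply).symm
    rw [h2, mul_adjugate, updateCol_self]
    simp [Matrix.one_apply, Pi.single_apply, Matrix.smul_apply]
  · rcases eq_or_ne k r with rfl | h2
    · have hcol : ∀ l, D l k = adjugate A l k := fun l => by
        rw [hD, updateCol_ne h1, updateCol_self]
      simp only [hcol]
      have h3 : ∑ l, A i l * adjugate A l k = (A * adjugate A) i k := (Matrix.mul_apply).symm
      rw [h3, mul_adjugate, updateCol_ne h1, updateCol_self]
      simp [Matrix.one_apply, Pi.single_apply, Matrix.smul_apply]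
    · have hcol : ∀ l, D l k = (1 : Matrix n n R) l k := fun l => by
        rw [hD, updateCol_ne h1, updateCol_ne h2]
      simp only [hcol]
      rw [updateCol_ne h1, updateCol_ne h2]
      simp [Matrix.one_apply, mul_ite, Finset.sum_ite_eq', Finset.mem_univ]

lemma key_identity {R : Type*} [CommRing R] {m : ℕ}
    (A : Matrix (Fin (m+2)) (Fin (m+2)) R) (r s : Fin (m+2)) (hrs : r ≠ s) :
    A.det * (adjugate A r r * adjugate A s s - adjugate A s r * adjugate A r s) =
      A.det * (A.det *
        (A.submatrix (fun k : {k : Fin (m+2) // k ≠ r ∧ k ≠ s} => k.val)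
                     (fun k : {k : Fin (m+2) // k ≠ r ∧ k ≠ s} => k.val)).det) := by
  classical
  rw [← det_D A r s hrs (det_one_two_basis r s hrs), ← det_mul, mul_D_eq A r s hrs,
    det_updateCol_smul, my_updateCol_comm hrs, det_updateCol_smul,
    my_updateCol_comm (Ne.symm hrs), det_update_basis_cols A r s hrs]

lemma jacobi_two {R : Type*} [CommRing R] {m : ℕ}
    (A : Matrix (Fin (m+2)) (Fin (m+2)) R) (r s : Fin (m+2)) (hrs : r ≠ s) :
    adjugate A r r * adjugate A s s - adjugate A s r * adjugate A r s =
      A.det *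
        (A.submatrix (fun k : {k : Fin (m+2) // k ≠ r ∧ k ≠ s} => k.val)
                     (fun k : {k : Fin (m+2) // k ≠ r ∧ k ≠ s} => k.val)).det := by
  classical
  let X : Matrix (Fin (m+2)) (Fin (m+2)) (MvPolynomial (Fin (m+2) × Fin (m+2)) ℤ) :=
    fun i j => MvPolynomial.X (i, j)
  have hXdet : X.det ≠ 0 := by
    intro h
    have h2 := congrArg (MvPolynomial.eval
      (fun p : Fin (m+2) × Fin (m+2) => if p.1 = p.2 then (1:ℤ) else 0)) h
    rw [map_zero, RingHom.map_det] at h2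
    have h3 : (MvPolynomial.eval
        (fun p : Fin (m+2) × Fin (m+2) => if p.1 = p.2 then (1:ℤ) else 0)).mapMatrix X =
        (1 : Matrix (Fin (m+2)) (Fin (m+2)) ℤ) := by
      ext i j
      show MvPolynomial.eval _ (MvPolynomial.X (i, j)) = _
      rw [MvPolynomial.eval_X]
      simp [Matrix.one_apply]
    rw [h3, det_one] at h2
    exact one_ne_zero h2
  have hjac := mul_left_cancel₀ hXdet (key_identity X r s hrs)
  let f : MvPolynomial (Fin (m+2) × Fin (m+2)) ℤ →+* R :=
    MvPolynomial.eval₂Hom (Int.castRingHom R) (fun p => A p.1 p.2)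
  have hmapX : f.mapMatrix X = A := by
    ext i j
    show f (MvPolynomial.X (i, j)) = A i j
    rw [MvPolynomial.eval₂Hom_X']
  have hadj : ∀ i j, f (adjugate X i j) = adjugate A i j := by
    intro i j
    have : f (adjugate X i j) = (f.mapMatrix (adjugate X)) i j := rfl
    rw [this, RingHom.map_adjugate, hmapX]
  have hdet : f X.det = A.det := by rw [RingHom.map_det, hmapX]
  have hsub : f ((X.submatrix (fun k : {k : Fin (m+2) // k ≠ r ∧ k ≠ s} => k.val)
      (fun k : {k : Fin (m+2) // k ≠ r ∧ k ≠ s} => k.val)).det) =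
      (A.submatrix (fun k : {k : Fin (m+2) // k ≠ r ∧ k ≠ s} => k.val)
      (fun k : {k : Fin (m+2) // k ≠ r ∧ k ≠ s} => k.val)).det := by
    rw [RingHom.map_det]
    congr 1
    ext i j
    show f (X i.val j.val) = A i.val j.val
    rw [show f (X i.val j.val) = (f.mapMatrix X) i.val j.val from rfl, hmapX]
  have h9 := congrArg f hjac
  rw [map_sub, f.map_mul, f.map_mul, f.map_mul, hadj, hadj, hadj, hadj, hdet, hsub] at h9
  exact h9

/-- For a skew-symmetric matrix `A` of even order `2N+2` and indices `r ≠ s`, the minor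
`A_{rs}` (delete row `r` and column `s`) satisfies `A_{rs}² = det A · det A_{rs,rs}`,
where `A_{rs,rs}` deletes rows `r,s` and columns `r,s`. -/
theorem skew_minor_sq_eq_det_mul_det {R : Type*} [CommRing R] {N : ℕ}
    (A : Matrix (Fin (2*N+2)) (Fin (2*N+2)) R)
    (hA : Aᵀ = -A) (hdiag : ∀ i, A i i = 0)
    (r s : Fin (2*N+2)) (hrs : r ≠ s) :
    ((A.submatrix r.succAbove s.succAbove).det) ^ 2 =
      A.det *
        (A.submatrix (fun k : {k : Fin (2*N+2) // k ≠ r ∧ k ≠ s} => k.val)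
                     (fun k : {k : Fin (2*N+2) // k ≠ r ∧ k ≠ s} => k.val)).det := by
  classical
  have hjac := jacobi_two (m := 2*N) A r s hrs
  -- diagonal adjugate entries vanish
  have hdiagadj : ∀ t : Fin (2*N+2), adjugate A t t = 0 := by
    intro t
    rw [adjugate_fin_succ_eq_det_submatrix]
    have h0 : (A.submatrix t.succAbove t.succAbove).det = 0 := by
      apply alt_odd_det_zero (m := 2*N+1) ⟨N, by ring⟩
      · ext i j
        have := congrFun (congrFun hA (t.succAbove i)) (t.succAbove j)
        simpa [transpose_apply, Matrix.neg_apply] using this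
      · intro i
        exact hdiag _
    rw [h0, mul_zero]
  -- antisymmetry of paired adjugate entries
  have hskewadj : adjugate A r s = - adjugate A s r := by
    rw [adjugate_fin_succ_eq_det_submatrix, adjugate_fin_succ_eq_det_submatrix]
    have htr : A.submatrix s.succAbove r.succAbove = -(A.submatrix r.succAbove s.succAbove)ᵀ := by
      ext i j
      have h8 := congrFun (congrFun hA (s.succAbove i)) (r.succAbove j)
      simp only [transpose_apply, Matrix.neg_apply] at h8
      simp only [submatrix_apply, transpose_apply, Matrix.neg_apply]
      linear_combination h8
    rw [htr, det_neg, det_transpose, Fintype.card_fin]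
    have h7 : ((-1 : R)) ^ (2*N+1) = -1 := Odd.neg_one_pow ⟨N, by ring⟩
    rw [h7, show (s:ℕ) + (r:ℕ) = (r:ℕ) + (s:ℕ) from Nat.add_comm _ _]
    ring
  rw [hdiagadj r, hdiagadj s, zero_mul, zero_sub, hskewadj] at hjac
  rw [adjugate_fin_succ_eq_det_submatrix] at hjac
  have h1 : ((-1 : R)) ^ ((r:ℕ) + (s:ℕ)) * ((-1 : R)) ^ ((r:ℕ) + (s:ℕ)) = 1 := by
    rw [← pow_add]
    exact Even.neg_one_pow ⟨(r:ℕ)+(s:ℕ), by ring⟩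
  rw [← hjac]
  linear_combination (-(((A.submatrix r.succAbove s.succAbove).det)^2)) * h1
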